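/- Let F be a simple graph on 48 vertices in which every vertex has degree 23 or 24. Then either F contains a vertex of degree 24 that is adjacent in F to at least 12 vertices of degree 24 in F, or the complement graph of F contains a vertex of degree 24 in the complement that is adjacent in the complement to at least 12 vertices of degree 24 in the complement. -/

import Mathlib

open Finset

/-- If every vertex of a 48-vertex graph F has degree 23 or 24, then F or its
complement has a vertex of degree 24 adjacent to at least 12 vertices of
degree 24 (degrees taken in the same graph). -/
theorem exists_deg24_with_12_deg24_neighbors
    (F : SimpleGraph (Fin 48)) [DecidableRel F.Adj]
    (hdeg : ∀ v, F.degree v = 23 ∨ F.degree v = 24) :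
    (∃ a, F.degree a = 24 ∧
      12 ≤ ((F.neighborFinset a).filter fun w => F.degree w = 24).card) ∨
    (∃ a, Fᶜ.degree a = 24 ∧
      12 ≤ ((Fᶜ.neighborFinset a).filter fun w => Fᶜ.degree w = 24).card) := by
  classical
  by_contra hcon
  push_neg at hcon
  obtain ⟨h1, h2⟩ := hcon
  set A : Finset (Fin 48) := univ.filter (fun v => F.degree v = 24) with hA
  set B : Finset (Fin 48) := univ.filter (fun v => F.degree v = 23) with hB
  have hcompl : ∀ v, Fᶜ.degree v = 47 - F.degree v := by
    intro v
    rw [SimpleGraph.degree_compl]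
    simp [Fintype.card_fin]
  have hABcard : A.card + B.card = 48 := by
    have : A.card + B.card = (univ : Finset (Fin 48)).card := by
      rw [← Finset.card_union_of_disjoint]
      · congr 1
        ext v
        rcases hdeg v with h | h <;> simp [hA, hB, h]
      · rw [Finset.disjoint_left]
        intro v hv hv'
        simp [hA, hB] at hv hv'
        omega
    simpa using this
  -- degree split: for any v, degree = (A-neighbors) + (B-neighbors)
  have hsplit : ∀ v, (A.filter (F.Adj v)).card + (B.filter (F.Adj v)).card
      = F.degree v := by
    intro v
    have : (A.filter (F.Adj v)) ∪ (B.filter (F.Adj v)) = F.neighborFinset v := by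
      ext w
      rcases hdeg w with h | h <;>
        simp [hA, hB, h, SimpleGraph.mem_neighborFinset, SimpleGraph.adj_comm]
    rw [← SimpleGraph.card_neighborFinset_eq_degree, ← this,
      Finset.card_union_of_disjoint]
    rw [Finset.disjoint_left]
    intro w hw hw'
    simp [hA, hB] at hw hw'
    omega
  -- lower bound for a ∈ A
  have hlow : ∀ a ∈ A, 13 ≤ (B.filter (F.Adj a)).card := by
    intro a ha
    simp only [hA, Finset.mem_filter] at ha
    have h11 : ((F.neighborFinset a).filter fun w => F.degree w = 24).card ≤ 11 := by
      have := h1 a ha.2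
      omega
    have heq : (A.filter (F.Adj a))
        = (F.neighborFinset a).filter fun w => F.degree w = 24 := by
      ext w
      simp [hA, SimpleGraph.mem_neighborFinset, SimpleGraph.adj_comm, and_comm]
    have := hsplit a
    rw [ha.2] at this
    rw [heq] at this
    omega
  -- upper bound for b ∈ B
  have hup : ∀ b ∈ B, (A.filter (F.Adj b)).card + B.card ≤ 35 := by
    intro b hb
    simp only [hB, Finset.mem_filter] at hb
    have hbdeg : Fᶜ.degree b = 24 := by rw [hcompl, hb.2]
    have h11 : ((Fᶜ.neighborFinset b).filter fun w => Fᶜ.degree w = 24).card ≤ 11 := by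
      have := h2 b hbdeg
      omega
    have heq : (B.filter (Fᶜ.Adj b))
        = (Fᶜ.neighborFinset b).filter fun w => Fᶜ.degree w = 24 := by
      ext w
      have hw := hcompl w
      rcases hdeg w with h | h <;>
        simp [hB, SimpleGraph.mem_neighborFinset, h, hw, SimpleGraph.adj_comm, and_comm]
    have hsub : B ⊆ insert b ((B.filter (F.Adj b)) ∪ (B.filter (Fᶜ.Adj b))) := by
      intro w hw
      by_cases hwb : w = b
      · simp [hwb]
      · by_cases hadj : F.Adj b w
        · simp [Finset.mem_insert, Finset.mem_union, Finset.mem_filter, hw, hadj]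
        · have : Fᶜ.Adj b w := by
            rw [SimpleGraph.compl_adj]
            exact ⟨fun h => hwb h.symm, hadj⟩
          simp [Finset.mem_insert, Finset.mem_union, Finset.mem_filter, hw, this, hwb, hadj, Ne.symm hwb]
    have hcard : B.card ≤ 1 + ((B.filter (F.Adj b)).card + (B.filter (Fᶜ.Adj b)).card) := by
      calc B.card ≤ (insert b ((B.filter (F.Adj b)) ∪ (B.filter (Fᶜ.Adj b)))).card :=
            Finset.card_le_card hsub
        _ ≤ 1 + ((B.filter (F.Adj b)) ∪ (B.filter (Fᶜ.Adj b))).card := by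
            have := Finset.card_insert_le b ((B.filter (F.Adj b)) ∪ (B.filter (Fᶜ.Adj b)))
            omega
        _ ≤ 1 + ((B.filter (F.Adj b)).card + (B.filter (Fᶜ.Adj b)).card) := by
            have := Finset.card_union_le (B.filter (F.Adj b)) (B.filter (Fᶜ.Adj b))
            omega
    rw [heq] at hcard
    have := hsplit b
    rw [hb.2] at this
    omega
  -- double counting
  have hkey : ∑ a ∈ A, (B.filter (F.Adj a)).card = ∑ b ∈ B, (A.filter (F.Adj b)).card := by
    have l : ∀ (s : Finset (Fin 48)) (v : Fin 48),
        (s.filter (F.Adj v)).card = ∑ w ∈ s, if F.Adj v w then 1 else 0 := by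
      intro s v; rw [Finset.card_filter]
    simp only [l]
    rw [Finset.sum_comm]
    apply Finset.sum_congr rfl
    intro b _
    apply Finset.sum_congr rfl
    intro a _
    simp [SimpleGraph.adj_comm]
  have hS1 : 13 * A.card ≤ ∑ a ∈ A, (B.filter (F.Adj a)).card := by
    calc 13 * A.card = ∑ _a ∈ A, 13 := by rw [Finset.sum_const]; ring
      _ ≤ _ := Finset.sum_le_sum hlow
  have hS2 : (∑ b ∈ B, (A.filter (F.Adj b)).card) + B.card * B.card ≤ 35 * B.card := by
    calc (∑ b ∈ B, (A.filter (F.Adj b)).card) + B.card * B.card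
        = ∑ b ∈ B, ((A.filter (F.Adj b)).card + B.card) := by
          rw [Finset.sum_add_distrib, Finset.sum_const, smul_eq_mul]
      _ ≤ ∑ _b ∈ B, 35 := Finset.sum_le_sum hup
      _ = 35 * B.card := by rw [Finset.sum_const]; ring
  have hfin : 13 * A.card + B.card * B.card ≤ 35 * B.card := by omega
  have hAc : A.card = 48 - B.card := by omega
  nlinarith [hABcard, hfin, sq_nonneg ((B.card : ℤ) - 24)]
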